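/- For all z, w in the hyperbolic upper half-plane ℍ with |Re z − Re w| ≤ π, and for every nonzero integer n, one has d(z, w + 2πn) ≥ log(n² / (Im z · Im w)). -/

import Mathlib

open UpperHalfPlane

/-- For all `z, w` in the hyperbolic upper half-plane with
`|Re z − Re w| ≤ π`, and for every nonzero integer `n`, one has
`d(z, w + 2πn) ≥ log(n² / (Im z · Im w))`. -/
theorem dist_translate_ge_log :
    ∀ z w : UpperHalfPlane, |z.re - w.re| ≤ Real.pi →
      ∀ n : ℤ, n ≠ 0 →
        dist z ((2 * Real.pi * (n : ℝ)) +ᵥ w) ≥ Real.log ((n : ℝ) ^ 2 / (z.im * w.im)) := by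
  intro z w hre n hn
  set w' := (2 * Real.pi * (n : ℝ)) +ᵥ w with hw'
  have hzim := z.im_pos
  have hwim := w.im_pos
  have hn1 : (1 : ℝ) ≤ |(n : ℝ)| := by
    rw [← Int.cast_abs]
    exact_mod_cast Int.one_le_abs hn
  -- bound on real part difference
  have hπ : (3 : ℝ) ≤ Real.pi := by linarith [Real.pi_gt_three]
  have hre' : 2 * |(n : ℝ)| ≤ |z.re - w'.re| := by
    have : w'.re = 2 * Real.pi * (n : ℝ) + w.re := vadd_re _ _
    rw [this]
    have h1 : |2 * Real.pi * (n : ℝ)| = 2 * Real.pi * |(n : ℝ)| := by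
      rw [abs_mul, abs_of_pos (by positivity : (0:ℝ) < 2 * Real.pi)]
    have h2 : |2 * Real.pi * (n : ℝ)| - |z.re - w.re| ≤ |z.re - (2 * Real.pi * (n : ℝ) + w.re)| := by
      have h := abs_sub_abs_le_abs_sub (2 * Real.pi * (n : ℝ)) (z.re - w.re)
      rwa [show 2 * Real.pi * (n : ℝ) - (z.re - w.re)
          = -(z.re - (2 * Real.pi * (n : ℝ) + w.re)) by ring, abs_neg] at h
    nlinarith [h2, h1, hre, hn1, Real.pi_pos]
  -- complex distance lower bound
  have hcd : 2 * |(n : ℝ)| ≤ dist (z : ℂ) (w' : ℂ) := by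
    calc 2 * |(n : ℝ)| ≤ |z.re - w'.re| := hre'
      _ = |((z : ℂ) - (w' : ℂ)).re| := by simp [Complex.sub_re, UpperHalfPlane.coe_re]
      _ ≤ ‖(z : ℂ) - (w' : ℂ)‖ := Complex.abs_re_le_norm _
      _ = dist (z : ℂ) (w' : ℂ) := (Complex.dist_eq _ _).symm
  set t : ℝ := dist (z : ℂ) (w' : ℂ) / (2 * Real.sqrt (z.im * w'.im)) with ht
  have hs : (0 : ℝ) < Real.sqrt (z.im * w'.im) := by
    apply Real.sqrt_pos.2; have := w'.im_pos; positivity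
  have htpos : 0 < t := by
    apply div_pos _ (by positivity)
    have := hcd; nlinarith
  have hdist : dist z w' = 2 * Real.arsinh t := UpperHalfPlane.dist_eq z w'
  -- log t ≤ arsinh t
  have hlog : Real.log t ≤ Real.arsinh t := by
    have h := Real.arsinh_le_arsinh (x := Real.sinh (Real.log t)) (y := t)
    rw [Real.arsinh_sinh] at h
    apply h.2
    rw [Real.sinh_log htpos]
    nlinarith [inv_pos.2 htpos]
  -- n^2/(im z * im w) ≤ t^2
  have hwim' : w'.im = w.im := vadd_im _ _
  have ht2 : (n : ℝ)^2 / (z.im * w.im) ≤ t^2 := by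
    rw [ht, div_pow, div_le_div_iff₀ (by positivity) (by positivity)]
    have hsq : Real.sqrt (z.im * w'.im) ^ 2 = z.im * w.im := by
      rw [Real.sq_sqrt (by nlinarith [w'.im_pos] : (0:ℝ) ≤ z.im * w'.im), hwim']
    have hd2 : (2 * |(n:ℝ)|)^2 ≤ dist (z : ℂ) (w' : ℂ) ^ 2 := by
      apply sq_le_sq' <;> nlinarith [abs_nonneg (n:ℝ), dist_nonneg (x := (z:ℂ)) (y := (w':ℂ))]
    have : (2 * |(n:ℝ)|)^2 = 4 * (n:ℝ)^2 := by rw [mul_pow, sq_abs]; norm_num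
    nlinarith [mul_pos hzim hwim]
  have hpos : (0:ℝ) < (n : ℝ)^2 / (z.im * w.im) := by
    have hne : (n:ℝ) ≠ 0 := by exact_mod_cast hn
    positivity
  rw [ge_iff_le]
  calc Real.log ((n : ℝ) ^ 2 / (z.im * w.im)) ≤ Real.log (t^2) := Real.log_le_log hpos ht2
    _ = 2 * Real.log t := by rw [Real.log_pow]; push_cast; ring
    _ ≤ 2 * Real.arsinh t := by linarith
    _ = dist z w' := hdist.symm
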